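/- Let G be a graph with n vertices and m edges all of whose degrees are even, obtained say after edge removals making all degrees even. If one repeatedly halves the graph by taking Euler tours in each connected component and deleting alternate edges (possibly first removing at most one edge per odd-edge-count component and at most n edges to fix parities), then after r rounds the number of remaining edges E_r satisfies m/2^r − 2n ≤ E_r ≤ m/2^r. -/
import Mathlib


/-- Repeated halving via Euler tours: starting from a graph with `m` edges on at most `n`
vertices, each round (after removing at most `n` edges to fix parities and then deleting
alternate edges along Euler tours) leaves between `e/2 − n` and `e/2` of the previous
round's `e` edges.  Then after `r` rounds the number `E r` of remaining edges satisfies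
`m/2^r − 2n ≤ E r ≤ m/2^r`. -/
theorem repeated_halving_bounds (n m : ℕ) (E : ℕ → ℕ)
    (h0 : E 0 = m)
    (hround : ∀ r : ℕ,
      ((E r : ℝ) / 2 - n ≤ E (r + 1)) ∧ ((E (r + 1) : ℝ) ≤ (E r : ℝ) / 2)) :
    ∀ r : ℕ, (m : ℝ) / 2 ^ r - 2 * n ≤ E r ∧ (E r : ℝ) ≤ (m : ℝ) / 2 ^ r := by
  intro r
  induction r with
  | zero => simp [h0]
  | succ r ih =>
    obtain ⟨ih1, ih2⟩ := ih
    obtain ⟨h1, h2⟩ := hround r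
    constructor
    · have : (m : ℝ) / 2 ^ (r + 1) - 2 * n ≤ (E r : ℝ) / 2 - n := by
        rw [pow_succ]
        have he : (m:ℝ) / (2 ^ r * 2) = ((m:ℝ) / 2 ^ r) / 2 := by ring
        rw [he]; linarith
      linarith
    · have : (E r : ℝ) / 2 ≤ (m : ℝ) / 2 ^ (r + 1) := by
        rw [pow_succ]
        have he : (m:ℝ) / (2 ^ r * 2) = ((m:ℝ) / 2 ^ r) / 2 := by ring
        rw [he]; linarith
      linarith
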